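/- Let π : X → Y be a covering map, where X is a nonempty, path-connected, locally path-connected, simply connected topological space and Y is a connected, locally path-connected Hausdorff space. Let Γ be a group acting faithfully on Y by homeomorphisms, and define Λ := { λ ∈ Homeo(X) : there exists γ ∈ Γ with π(λ(x)) = γ • π(x) for all x ∈ X }, acting on X in the obvious way. Then the map sending the Λ-orbit of x ∈ X to the Γ-orbit of π(x) ∈ Y is well defined and is a homeomorphism from the orbit space X/Λ onto the orbit space Y/Γ, where both orbit spaces carry the quotient topology. (This is the paper's claim that Ũ/Γ = U^#/Λ for the universal cover U^# of Ũ.) -/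

import Mathlib

open Set Topology unitInterval

theorem my_range_isClopen {E B : Type*} [TopologicalSpace E] [TopologicalSpace B] {p : E → B}
    (hp : IsCoveringMap p) : IsClopen (Set.range p) := by
  refine ⟨?_, hp.isOpenMap.isOpen_range⟩
  rw [← isOpen_compl_iff, isOpen_iff_forall_mem_open]
  intro b hb
  obtain ⟨_, U, hbU, hU, _, H, hH⟩ := hp b
  refine ⟨U, fun y hy => ?_, hU, hbU⟩
  rintro ⟨e, rfl⟩
  obtain ⟨i, hi⟩ := (H ⟨e, hy⟩).2
  exact hb ⟨i, hi⟩

theorem my_exists_lift_prod {E B A : Type*} [TopologicalSpace E] [TopologicalSpace B]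
    [TopologicalSpace A] {p : E → B}
    (hp : IsCoveringMap p) (F : I × A → B) (hF : Continuous F)
    {y₀ : B} (h0 : ∀ a, F (0, a) = y₀) {e₀ : E} (he₀ : p e₀ = y₀) :
    ∃ G : I × A → E, Continuous G ∧ (∀ a, G (0, a) = e₀) ∧ ∀ z, p (G z) = F z := by
  set F' : ℝ × A → B := fun z => F (projIcc 0 1 zero_le_one z.1, z.2) with hF'def
  have hF'c : Continuous F' :=
    hF.comp ((continuous_projIcc.comp continuous_fst).prodMk continuous_snd)
  have hF'0 : ∀ t : ℝ, t ≤ 0 → ∀ a, F' (t, a) = y₀ := by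
    intro t ht a
    have : projIcc (0:ℝ) 1 zero_le_one t = 0 := by rw [projIcc_of_le_left _ ht]; rfl
    simp [F', this, h0]
  have key : ∀ a₀ : A, ∃ N : Set A, IsOpen N ∧ a₀ ∈ N ∧ ∃ G : ℝ × A → E,
      ContinuousOn G (univ ×ˢ N) ∧ ∀ a ∈ N, G (0, a) = e₀ ∧
        ∀ t : ℝ, p (G (t, a)) = F' (min t 1, a) := by
    intro a₀
    have hne : ∀ t : ℝ, Nonempty (p ⁻¹' {F' (t, a₀)}) := by
      have hcl : (fun t : ℝ => F' (t, a₀)) ⁻¹' Set.range p = univ :=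
        ((my_range_isClopen hp).preimage (hF'c.comp (continuous_id.prodMk continuous_const))).eq_univ
          ⟨0, ⟨e₀, by show p e₀ = F' ((0:ℝ), a₀); rw [he₀, hF'0 0 le_rfl a₀]⟩⟩
      intro t
      obtain ⟨x, hx⟩ : F' (t, a₀) ∈ Set.range p := by
        have := Set.mem_univ t
        rw [← hcl] at this
        exact this
      exact ⟨⟨x, hx⟩⟩
    -- rectangles mapping into evenly covered sets
    have rect : ∀ t : ℝ, ∃ u : Set ℝ, ∃ v : Set A, IsOpen u ∧ IsOpen v ∧ t ∈ u ∧ a₀ ∈ v ∧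
        ∀ s ∈ u, ∀ a ∈ v,
          F' (s, a) ∈ ((hp (F' (t, a₀))).toTrivialization).baseSet := by
      intro t
      have hU : IsOpen (F' ⁻¹' ((hp (F' (t, a₀))).toTrivialization).baseSet) :=
        ((hp (F' (t, a₀))).toTrivialization).open_baseSet.preimage hF'c
      obtain ⟨u, v, hu, hv, htu, hav, hsub⟩ := (isOpen_prod_iff.mp hU) t a₀
        ((hp (F' (t, a₀))).mem_toTrivialization_baseSet)
      exact ⟨u, v, hu, hv, htu, hav, fun s hs a ha => hsub (mk_mem_prod hs ha)⟩
    choose u v hu hv htu hav hsub using rect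
    obtain ⟨δ, hδ, hball⟩ := lebesgue_number_lemma_of_metric
      (isCompact_Icc (a := (0:ℝ)) (b := 1)) hu
      (fun t _ => mem_iUnion.mpr ⟨t, htu t⟩)
    obtain ⟨n, hn⟩ := exists_nat_one_div_lt hδ
    set m : ℕ := n + 1 with hmdef
    have hm : (0:ℝ) < m := by positivity
    have hstripsel : ∀ i : ℕ, ∃ τ : ℝ, Metric.ball (min ((i:ℝ)/m) 1) δ ⊆ u τ := fun i =>
      hball _ ⟨le_min (by positivity) zero_le_one, min_le_right _ _⟩
    choose τ hτ using hstripsel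
    refine ⟨⋂ i ∈ Finset.range m, v (τ i), isOpen_biInter_finset (fun i _ => hv (τ i)),
      mem_iInter₂.mpr (fun i _ => hav (τ i)), ?_⟩
    set N : Set A := ⋂ i ∈ Finset.range m, v (τ i) with hNdef
    have hNv : ∀ i : ℕ, i < m → N ⊆ v (τ i) := fun i hi =>
      biInter_subset_of_mem (Finset.mem_range.mpr hi)
    -- each strip lands in the corresponding evenly covered set
    have strip : ∀ i : ℕ, i < m → ∀ s : ℝ, (i:ℝ)/m ≤ s → s ≤ ((i:ℝ)+1)/m → ∀ a ∈ N,
        F' (s, a) ∈ ((hp (F' (τ i, a₀))).toTrivialization).baseSet := by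
      intro i hi s hs1 hs2 a ha
      have him : ((i:ℝ))/m ≤ 1 := by
        rw [div_le_one hm]; exact_mod_cast hi.le
      have hsu : s ∈ u (τ i) := by
        apply hτ i
        rw [min_eq_left him]
        rw [Metric.mem_ball, Real.dist_eq, abs_of_nonneg (by linarith)]
        have : s - (i:ℝ)/m ≤ 1/m := by
          have : ((i:ℝ)+1)/m - (i:ℝ)/m = 1/m := by ring
          linarith
        calc s - (i:ℝ)/m ≤ 1/m := this
          _ = 1/(n+1) := by norm_num [hmdef]
          _ < δ := hn
      exact hsub (τ i) s hsu a (hNv i hi ha)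
    -- inductive construction of the lift on strips
    have ind : ∀ i : ℕ, i ≤ m → ∃ G : ℝ × A → E, ContinuousOn G (univ ×ˢ N) ∧
        (∀ a ∈ N, G (0, a) = e₀) ∧
        ∀ a ∈ N, ∀ t : ℝ, p (G (t, a)) = F' (min t ((i:ℝ)/m), a) := by
      intro i
      induction i with
      | zero =>
        intro _
        refine ⟨fun _ => e₀, continuousOn_const, fun a _ => rfl, fun a ha t => ?_⟩
        rw [he₀, hF'0 _ (by simpa using min_le_right t 0) a]
      | succ i ih =>
        intro him
        obtain ⟨G, hGc, hG0, hGp⟩ := ih (Nat.le_of_succ_le him)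
        have hi : i < m := him
        set ti : ℝ := (i:ℝ)/m with htidef
        set ti1 : ℝ := ((i:ℝ)+1)/m with hti1def
        have hti0 : 0 ≤ ti := by positivity
        have htile : ti ≤ ti1 := by
          rw [htidef, hti1def, div_le_div_iff_of_pos_right hm]
          linarith
        set e := (hp (F' (τ i, a₀))).toTrivialization with hedef
        have hsrc : ∀ a ∈ N, G (ti, a) ∈ e.source := by
          intro a ha
          rw [e.mem_source, hGp a ha ti, min_self]
          exact strip i hi ti le_rfl htile a ha
        set d : A → ↥(p ⁻¹' {F' (τ i, a₀)}) := fun a => (e (G (ti, a))).2 with hddef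
        set G' : ℝ × A → E := fun z => if z.1 ≤ ti then G z
          else e.toOpenPartialHomeomorph.symm (F' (min z.1 ti1, z.2), d z.2) with hG'def
        have hmemtarget : ∀ (t : ℝ) (a : A), a ∈ N → ti ≤ t →
            (F' (min t ti1, a), d a) ∈ e.target := by
          intro t a ha hta
          rw [e.mem_target]
          exact strip i hi _ (le_min hta htile) (min_le_right _ _) a ha
        have hbdry : ∀ a ∈ N, e.toOpenPartialHomeomorph.symm (F' (min ti ti1, a), d a) = G (ti, a) := by
          intro a ha
          have h1 : F' (min ti ti1, a) = p (G (ti, a)) := by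
            rw [min_eq_left htile, hGp a ha ti, min_self]
          rw [h1]
          have h2 : (p (G (ti, a)), d a) = e (G (ti, a)) := e.mk_proj_snd (hsrc a ha)
          rw [hddef] at h2 ⊢
          rw [h2]
          exact e.toOpenPartialHomeomorph.left_inv (hsrc a ha)
        refine ⟨G', ?_, ?_, ?_⟩
        · -- continuity
          rw [continuousOn_iff_continuous_restrict]
          have hd : Continuous fun w : ↥((univ : Set ℝ) ×ˢ N) => d (w : ℝ × A).2 := by
            have h1 : Continuous fun w : ↥((univ : Set ℝ) ×ˢ N) => G (ti, (w : ℝ × A).2) :=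
              hGc.comp_continuous
                (continuous_const.prodMk (continuous_snd.comp continuous_subtype_val))
                (fun w : ↥((univ : Set ℝ) ×ˢ N) => ⟨trivial, w.2.2⟩)
            have h2 : Continuous ((e : E → B × ↥(p ⁻¹' {F' (τ i, a₀)})) ∘
                (fun w : ↥((univ : Set ℝ) ×ˢ N) => G (ti, (w : ℝ × A).2))) :=
              e.toOpenPartialHomeomorph.continuousOn.comp_continuous h1
                (fun w : ↥((univ : Set ℝ) ×ˢ N) => hsrc _ w.2.2)
            exact continuous_snd.comp h2
          have hB2 : ContinuousOn (fun w : ↥((univ : Set ℝ) ×ˢ N) =>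
              e.toOpenPartialHomeomorph.symm (F' (min (w : ℝ × A).1 ti1, (w : ℝ × A).2), d (w : ℝ × A).2))
              {w : ↥((univ : Set ℝ) ×ˢ N) | ti ≤ (w : ℝ × A).1} := by
            apply e.toOpenPartialHomeomorph.continuousOn_symm.comp
            · apply Continuous.continuousOn
              apply Continuous.prodMk
              · exact hF'c.comp
                  (((continuous_fst.comp continuous_subtype_val).min continuous_const).prodMk
                    (continuous_snd.comp continuous_subtype_val))
              · exact hd
            · intro w hw
              exact hmemtarget _ _ w.2.2 hw
          have := continuous_if_le
            (f := fun w : ↥((univ : Set ℝ) ×ˢ N) => (w : ℝ × A).1)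
            (g := fun _ => ti)
            (f' := fun w : ↥((univ : Set ℝ) ×ˢ N) => G (w : ℝ × A))
            (g' := fun w : ↥((univ : Set ℝ) ×ˢ N) =>
              e.toOpenPartialHomeomorph.symm (F' (min (w : ℝ × A).1 ti1, (w : ℝ × A).2), d (w : ℝ × A).2))
            (continuous_fst.comp continuous_subtype_val) continuous_const
            ((continuousOn_iff_continuous_restrict.mp hGc).continuousOn)
            hB2
            (by
              intro w hw
              have hw' : ((w : ℝ × A).1) = ti := hw
              have h2 := (hbdry (w : ℝ × A).2 w.2.2).symm
              rw [← hw'] at h2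
              simpa using h2)
          exact this
        · intro a ha
          simp only [hG'def]
          rw [if_pos hti0, hG0 a ha]
        · intro a ha t
          have hcast : ((i+1 : ℕ) : ℝ) / (m:ℝ) = ti1 := by rw [hti1def]; push_cast; ring
          rw [hcast]
          by_cases h : t ≤ ti
          · simp only [hG'def]
            rw [if_pos h, hGp a ha t, min_eq_left h, min_eq_left (h.trans htile)]
          · simp only [hG'def]
            rw [if_neg h]
            exact e.proj_symm_apply (hmemtarget t a ha (not_le.mp h).le)
    obtain ⟨G, hGc, hG0, hGp⟩ := ind m le_rfl
    refine ⟨G, hGc, fun a ha => ⟨hG0 a ha, fun t => ?_⟩⟩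
    rw [hGp a ha t, div_self (ne_of_gt hm)]
  choose N hNo hNmem G hGc hG using key
  have uniq : ∀ a₀ a₁ a : A, a ∈ N a₀ → a ∈ N a₁ →
      (fun s : ℝ => G a₀ (s, a)) = fun s : ℝ => G a₁ (s, a) := by
    intro a₀ a₁ a h0a h1a
    refine hp.eq_of_comp_eq
      ((hGc a₀).comp_continuous (continuous_id.prodMk continuous_const)
        (fun s => ⟨trivial, h0a⟩))
      ((hGc a₁).comp_continuous (continuous_id.prodMk continuous_const)
        (fun s => ⟨trivial, h1a⟩))
      (funext fun s => ?_) 0 ?_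
    · show p (G a₀ (s, a)) = p (G a₁ (s, a))
      rw [(hG a₀ a h0a).2 s, (hG a₁ a h1a).2 s]
    · show G a₀ (0, a) = G a₁ (0, a)
      rw [(hG a₀ a h0a).1, (hG a₁ a h1a).1]
  refine ⟨fun z => G z.2 ((z.1 : ℝ), z.2), ?_, ?_, ?_⟩
  · rw [continuous_iff_continuousAt]
    rintro ⟨t, a⟩
    have hnhds : (univ : Set ℝ) ×ˢ N a ∈ 𝓝 ((t : ℝ), a) :=
      prod_mem_nhds Filter.univ_mem ((hNo a).mem_nhds (hNmem a))
    have hev : (fun z : I × A => G z.2 ((z.1 : ℝ), z.2)) =ᶠ[𝓝 (t, a)]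
        fun z : I × A => G a ((z.1 : ℝ), z.2) := by
      have : (univ : Set I) ×ˢ N a ∈ 𝓝 (t, a) :=
        prod_mem_nhds Filter.univ_mem ((hNo a).mem_nhds (hNmem a))
      filter_upwards [this]
      rintro ⟨s, b⟩ ⟨-, hb⟩
      exact congrFun (uniq b a b (hNmem b) hb) (s : ℝ)
    have hc2 : ContinuousAt (fun z : I × A => G a ((z.1 : ℝ), z.2)) (t, a) := by
      have h1 : ContinuousAt (G a) ((t : ℝ), a) := (hGc a).continuousAt hnhds
      exact ContinuousAt.comp h1
        (Continuous.continuousAt (x := (t, a))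
          ((continuous_subtype_val.comp continuous_fst).prodMk continuous_snd))
    exact hc2.congr hev.symm
  · intro a
    have h := (hG a a (hNmem a)).1
    simpa using h
  · rintro ⟨t, a⟩
    have h := (hG a a (hNmem a)).2 (t : ℝ)
    rw [min_eq_left t.2.2] at h
    have : F' ((t : ℝ), a) = F (t, a) := by
      simp [hF'def, projIcc_val]
    rw [h, this]


theorem my_lift_end_eq {E B : Type*} [TopologicalSpace E] [TopologicalSpace B] {p : E → B}
    (hp : IsCoveringMap p) {φ ψ : C(I, B)} (H : φ.HomotopyRel ψ {0, 1})
    {L M : I → E} (hLc : Continuous L) (hMc : Continuous M)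
    (hLp : ∀ t, p (L t) = φ t) (hMp : ∀ t, p (M t) = ψ t)
    (hLM : L 0 = M 0) : L 1 = M 1 := by
  set F : I × I → B := fun z => H (z.2, z.1) with hFdef
  have hFc : Continuous F := H.continuous.comp (continuous_snd.prodMk continuous_fst)
  have h0 : ∀ s : I, F (0, s) = φ 0 := fun s => H.eq_fst s (Set.mem_insert _ _)
  have he₀ : p (L 0) = φ 0 := hLp 0
  obtain ⟨G, hGc, hG0, hGp⟩ := my_exists_lift_prod hp F hFc h0 he₀
  have slice : ∀ s : I, Continuous fun t : I => G (t, s) := fun s =>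
    hGc.comp (continuous_id.prodMk continuous_const)
  have h1 : (fun t : I => G (t, 0)) = L := by
    refine hp.eq_of_comp_eq (slice 0) hLc (funext fun t => ?_) 0 (hG0 0)
    show p (G (t, 0)) = p (L t)
    rw [hGp (t, 0), hLp t]
    exact H.apply_zero t
  have h2 : (fun t : I => G (t, 1)) = M := by
    refine hp.eq_of_comp_eq (slice 1) hMc (funext fun t => ?_) 0 ?_
    · show p (G (t, 1)) = p (M t)
      rw [hGp (t, 1), hMp t]
      exact H.apply_one t
    · show G (0, 1) = M 0
      rw [hG0 1, hLM]
  have h3 : G (1, 0) = G (1, 1) := by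
    refine hp.const_of_comp (g := fun s : I => G (1, s))
      (hGc.comp (continuous_const.prodMk continuous_id)) (fun s s' => ?_) 0 1
    have e1 : ∀ s : I, p (G (1, s)) = φ 1 := fun s => by
      rw [hGp (1, s)]
      exact H.eq_fst s (Set.mem_insert_iff.mpr (Or.inr rfl))
    rw [e1 s, e1 s']
  calc L 1 = G (1, 0) := (congrFun h1 1).symm
    _ = G (1, 1) := h3
    _ = M 1 := congrFun h2 1

theorem my_exists_lift {E B A : Type*} [TopologicalSpace E] [TopologicalSpace B]
    [TopologicalSpace A] [PathConnectedSpace A] [LocallyPathConnectedSpace A]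
    [SimplyConnectedSpace A] {p : E → B}
    (hp : IsCoveringMap p) (f : A → B) (hf : Continuous f) (a₀ : A) (e₀ : E)
    (he₀ : p e₀ = f a₀) :
    ∃ g : A → E, Continuous g ∧ g a₀ = e₀ ∧ ∀ a, p (g a) = f a := by
  have lift_of_path : ∀ (a : A) (P : Path a₀ a), ∃ L : I → E,
      Continuous L ∧ L 0 = e₀ ∧ ∀ t, p (L t) = f (P t) := by
    intro a P
    obtain ⟨G, hGc, hG0, hGp⟩ := my_exists_lift_prod (A := Unit) hp
      (fun z => f (P z.1)) (hf.comp (P.continuous.comp continuous_fst))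
      (y₀ := f a₀) (fun _ => by show f (P 0) = f a₀; rw [P.source]) (e₀ := e₀) he₀
    exact ⟨fun t => G (t, ()), hGc.comp (continuous_id.prodMk continuous_const),
      hG0 (), fun t => hGp (t, ())⟩
  set Pa : ∀ a : A, Path a₀ a := fun a => PathConnectedSpace.somePath a₀ a with hPa
  choose L hLc hL0 hLp using fun a => lift_of_path a (Pa a)
  have endpt : ∀ (a : A) (R : Path a₀ a) (M : I → E), Continuous M → M 0 = e₀ →
      (∀ t, p (M t) = f (R t)) → M 1 = L a 1 := by
    intro a R M hMc hM0 hMp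
    obtain ⟨H⟩ := SimplyConnectedSpace.paths_homotopic R (Pa a)
    have H' := H.compContinuousMap ⟨f, hf⟩
    exact my_lift_end_eq hp H' hMc (hLc a) (fun t => hMp t) (fun t => hLp a t)
      (by rw [hM0, hL0 a])
  refine ⟨fun a => L a 1, ?_, ?_, ?_⟩
  · rw [continuous_iff_continuousAt]
    intro a
    haveI : Nonempty (p ⁻¹' {f a}) := ⟨⟨L a 1, by show p (L a 1) = f a; rw [hLp a 1, (Pa a).target]⟩⟩
    set e := (hp (f a)).toTrivialization with hedef
    have hfa : f a ∈ e.baseSet := (hp (f a)).mem_toTrivialization_baseSet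
    obtain ⟨V, ⟨hVnhds, hVpc⟩, hVsub⟩ := (path_connected_basis a).mem_iff.mp
      (hf.continuousAt.preimage_mem_nhds (e.open_baseSet.mem_nhds hfa))
    set d := (e (L a 1)).2 with hddef
    have hpa1 : p (L a 1) = f a := by rw [hLp a 1, (Pa a).target]
    have hga_src : L a 1 ∈ e.source := e.mem_source.mpr (by rw [hpa1]; exact hfa)
    have claim : ∀ a', a' ∈ V → L a' 1 = e.toOpenPartialHomeomorph.symm (f a', d) := by
      intro a' ha'
      have haV : a ∈ V := mem_of_mem_nhds hVnhds
      set q := (hVpc.joinedIn a haV a' ha').somePath with hq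
      have hqmem : ∀ t, q t ∈ V := (hVpc.joinedIn a haV a' ha').somePath_mem
      have hqbase : ∀ s : I, f (q s) ∈ e.baseSet := fun s => hVsub (hqmem s)
      set M : I → E := fun s => e.toOpenPartialHomeomorph.symm (f (q s), d) with hM
      have hMc : Continuous M :=
        e.toOpenPartialHomeomorph.continuousOn_symm.comp_continuous
          ((hf.comp q.continuous).prodMk continuous_const)
          (fun s => e.mem_target.mpr (hqbase s))
      have hMp : ∀ s, p (M s) = f (q s) := fun s =>
        e.proj_symm_apply (e.mem_target.mpr (hqbase s))
      have hM0 : M 0 = L a 1 := by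
        have h1 : (f a, d) = e (L a 1) := by
          have h2 := e.mk_proj_snd hga_src
          exact Prod.ext (hpa1.symm.trans (congrArg Prod.fst h2)) hddef
        show e.toOpenPartialHomeomorph.symm (f (q 0), d) = L a 1
        rw [q.source, h1]
        exact e.toOpenPartialHomeomorph.left_inv hga_src
      set LP : Path e₀ (L a 1) := ⟨⟨L a, hLc a⟩, hL0 a, rfl⟩ with hLP
      set MP : Path (L a 1) (M 1) := ⟨⟨M, hMc⟩, hM0, rfl⟩ with hMP
      have hcomp : ∀ t, p ((LP.trans MP) t) = f (((Pa a).trans q) t) := by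
        intro t
        rw [Path.trans_apply, Path.trans_apply]
        split_ifs with h
        · exact hLp a _
        · exact hMp _
      have hend := endpt a' ((Pa a).trans q) (LP.trans MP) (LP.trans MP).continuous
        (LP.trans MP).source hcomp
      have : (LP.trans MP) 1 = M 1 := (LP.trans MP).target
      rw [this] at hend
      rw [← hend, hM]
      show e.toOpenPartialHomeomorph.symm (f (q 1), d) = _
      rw [q.target]
    have hcongr : (fun a' => L a' 1) =ᶠ[𝓝 a]
        fun a' => e.toOpenPartialHomeomorph.symm (f a', d) := by
      filter_upwards [hVnhds] with a' ha' using claim a' ha'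
    have hc2 : ContinuousAt (fun a' => e.toOpenPartialHomeomorph.symm (f a', d)) a := by
      have htin : (f a, d) ∈ e.target := e.mem_target.mpr hfa
      have h1 : ContinuousAt (e.toOpenPartialHomeomorph.symm) (f a, d) :=
        e.toOpenPartialHomeomorph.continuousOn_symm.continuousAt
          (e.open_target.mem_nhds htin)
      exact ContinuousAt.comp (x := a) h1 ((hf.prodMk continuous_const).continuousAt)
    exact hc2.congr hcongr.symm
  · have := endpt a₀ (Path.refl a₀) (fun _ => e₀) continuous_const rfl
      (fun t => by rw [he₀, Path.refl_apply])
    exact this.symm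
  · intro a
    rw [hLp a 1, (Pa a).target]

theorem my_deck {X Y : Type*} [TopologicalSpace X] [TopologicalSpace Y]
    [PathConnectedSpace X] [LocallyPathConnectedSpace X] [SimplyConnectedSpace X]
    {Γ : Type*} [Group Γ] [MulAction Γ Y] [ContinuousConstSMul Γ Y]
    (π : X → Y) (hπ : IsCoveringMap π) (x x' : X) (γ : Γ) (h : π x' = γ • π x) :
    ∃ l : X ≃ₜ X, (∀ z, π (l z) = γ • π z) ∧ l x = x' := by
  obtain ⟨l, hlc, hlx, hlp⟩ := my_exists_lift hπ (fun z => γ • π z)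
    ((continuous_const_smul γ).comp hπ.continuous) x x' h
  obtain ⟨m, hmc, hmx, hmp⟩ := my_exists_lift hπ (fun z => γ⁻¹ • π z)
    ((continuous_const_smul γ⁻¹).comp hπ.continuous) x' x
    (by show π x = γ⁻¹ • π x'; rw [h, inv_smul_smul])
  have hml : m ∘ l = id := by
    refine hπ.eq_of_comp_eq (hmc.comp hlc) continuous_id (funext fun z => ?_) x ?_
    · show π (m (l z)) = π z
      rw [hmp (l z), hlp z, inv_smul_smul]
    · show m (l x) = x
      rw [hlx, hmx]
  have hlm : l ∘ m = id := by
    refine hπ.eq_of_comp_eq (hlc.comp hmc) continuous_id (funext fun z => ?_) x' ?_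
    · show π (l (m z)) = π z
      rw [hlp (m z), hmp z, smul_inv_smul]
    · show l (m x') = x'
      rw [hmx, hlx]
  exact ⟨⟨⟨l, m, fun z => congrFun hml z, fun z => congrFun hlm z⟩, hlc, hmc⟩, hlp, hlx⟩

/-- Given a covering `π : X → Y` of a connected space by a simply connected one and an
action of a group `Γ` on `Y` by homeomorphisms, let `Λ` be the collection of
homeomorphisms of `X` lying over some element of `Γ`. Then the map sending the
`Λ`-orbit of `x` to the `Γ`-orbit of `π x` is a well-defined homeomorphism of the
orbit space `X/Λ` onto the orbit space `Y/Γ` (both with the quotient topology). -/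
theorem orbit_space_homeomorph {X Y : Type*} [TopologicalSpace X] [TopologicalSpace Y]
    [Nonempty X] [PathConnectedSpace X] [LocallyPathConnectedSpace X] [SimplyConnectedSpace X]
    [ConnectedSpace Y] [LocallyPathConnectedSpace Y] [T2Space Y]
    {Γ : Type*} [Group Γ] [MulAction Γ Y] [ContinuousConstSMul Γ Y] [FaithfulSMul Γ Y]
    (π : X → Y) (hπ : IsCoveringMap π)
    (rX : X → X → Prop)
    (hrX : ∀ x x' : X, rX x x' ↔
      ∃ l : X ≃ₜ X, (∃ γ : Γ, ∀ z : X, π (l z) = γ • π z) ∧ l x = x')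
    (rY : Y → Y → Prop)
    (hrY : ∀ y y' : Y, rY y y' ↔ ∃ γ : Γ, γ • y = y') :
    ∃ h : Quot rX ≃ₜ Quot rY, ∀ x : X, h (Quot.mk rX x) = Quot.mk rY (π x) := by
  have hsurj : Function.Surjective π :=
    Set.range_eq_univ.mp ((my_range_isClopen hπ).eq_univ (Set.range_nonempty π))
  have deck : ∀ (x x' : X) (γ : Γ), π x' = γ • π x → rX x x' := by
    intro x x' γ h
    obtain ⟨l, hl, hlx⟩ := my_deck π hπ x x' γ h
    exact (hrX x x').mpr ⟨l, ⟨γ, hl⟩, hlx⟩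
  have wd : ∀ x x' : X, rX x x' → Quot.mk rY (π x) = Quot.mk rY (π x') := by
    intro x x' h
    obtain ⟨l, ⟨γ, hl⟩, hx⟩ := (hrX x x').mp h
    exact Quot.sound ((hrY _ _).mpr ⟨γ, by rw [← hl x, hx]⟩)
  set s : Y → X := Function.surjInv hsurj with hsdef
  have hs : ∀ y, π (s y) = y := fun y => Function.surjInv_eq hsurj y
  have wdY : ∀ y y' : Y, rY y y' → Quot.mk rX (s y) = Quot.mk rX (s y') := by
    intro y y' h
    obtain ⟨γ, hγ⟩ := (hrY y y').mp h
    exact Quot.sound (deck (s y) (s y') γ (by rw [hs, hs, hγ]))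
  have hsx : ∀ x : X, Quot.mk rX (s (π x)) = Quot.mk rX x := by
    intro x
    exact Quot.sound (deck (s (π x)) x 1 (by rw [hs, one_smul]))
  have hqm : IsQuotientMap (fun x : X => Quot.mk rY (π x)) := by
    have h1 : IsQuotientMap (Quot.mk rY) := isQuotientMap_quot_mk
    have h2 : IsQuotientMap π := hπ.isQuotientMap hsurj
    exact h1.comp h2
  refine ⟨⟨⟨Quot.lift (fun x => Quot.mk rY (π x)) wd,
    Quot.lift (fun y => Quot.mk rX (s y)) wdY, ?_, ?_⟩, ?_, ?_⟩, fun x => rfl⟩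
  · refine Quot.ind fun x => ?_
    exact hsx x
  · refine Quot.ind fun y => ?_
    show Quot.mk rY (π (s y)) = Quot.mk rY y
    rw [hs]
  · exact continuous_quot_lift _ (continuous_quot_mk.comp hπ.continuous)
  · show Continuous (Quot.lift (fun y => Quot.mk rX (s y)) wdY)
    rw [hqm.continuous_iff]
    have heq : ((Quot.lift (fun y => Quot.mk rX (s y)) wdY) ∘ fun x : X => Quot.mk rY (π x))
        = fun x : X => Quot.mk rX x := by
      funext x
      exact hsx x
    rw [heq]
    exact continuous_quot_mk
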